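/- arXiv:2505.23592 — 3 statements merged into one kernel-verified Lean document; each statement's English description precedes it below -/
import Mathlib

section
/- If Z₁ satisfies ‖Z₁‖_q ≤ κ₁·q^{α₁} for all q ≥ 1 and Z₂ satisfies ‖Z₂‖_q ≤ κ₂·q^{α₂} for all q ≥ 1, then their product satisfies ‖Z₁Z₂‖_q ≤ [(α₁+α₂)^{α₁+α₂}/(α₁^{α₁}·α₂^{α₂})]·κ₁·κ₂·q^{α₁+α₂} for all q ≥ 1. -/
open MeasureTheory ProbabilityTheory

/-- **Product of sub-Weibull random variables.**
If `‖Z₁‖_q ≤ κ₁ q^{α₁}` and `‖Z₂‖_q ≤ κ₂ q^{α₂}` for all `q ≥ 1`, then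
`‖Z₁ Z₂‖_q ≤ ((α₁+α₂)^{α₁+α₂}/(α₁^{α₁} α₂^{α₂})) κ₁ κ₂ q^{α₁+α₂}` for all `q ≥ 1`. -/
theorem subWeibull_product
    {Ω : Type*} [MeasurableSpace Ω] (μ : Measure Ω) [IsProbabilityMeasure μ]
    (Z₁ Z₂ : Ω → ℝ) (hZ₁ : AEStronglyMeasurable Z₁ μ) (hZ₂ : AEStronglyMeasurable Z₂ μ)
    (κ₁ κ₂ α₁ α₂ : ℝ) (hκ₁ : 0 < κ₁) (hκ₂ : 0 < κ₂) (hα₁ : 0 < α₁) (hα₂ : 0 < α₂)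
    (hmom₁ : ∀ q : ℝ, 1 ≤ q →
      eLpNorm Z₁ (ENNReal.ofReal q) μ ≤ ENNReal.ofReal (κ₁ * q ^ α₁))
    (hmom₂ : ∀ q : ℝ, 1 ≤ q →
      eLpNorm Z₂ (ENNReal.ofReal q) μ ≤ ENNReal.ofReal (κ₂ * q ^ α₂)) :
    ∀ q : ℝ, 1 ≤ q →
      eLpNorm (fun ω => Z₁ ω * Z₂ ω) (ENNReal.ofReal q) μ
        ≤ ENNReal.ofReal
            ((α₁ + α₂) ^ (α₁ + α₂) / (α₁ ^ α₁ * α₂ ^ α₂) * κ₁ * κ₂ * q ^ (α₁ + α₂)) := by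
  intro q hq
  have hq0 : 0 < q := lt_of_lt_of_le one_pos hq
  have hα : 0 < α₁ + α₂ := add_pos hα₁ hα₂
  set q₁ : ℝ := q * ((α₁ + α₂) / α₁) with hq₁def
  set q₂ : ℝ := q * ((α₁ + α₂) / α₂) with hq₂def
  have hr₁ : (1:ℝ) ≤ (α₁ + α₂) / α₁ := by
    rw [le_div_iff₀ hα₁]; linarith
  have hr₂ : (1:ℝ) ≤ (α₁ + α₂) / α₂ := by
    rw [le_div_iff₀ hα₂]; linarith
  have hq₁ : 1 ≤ q₁ := le_trans hq (le_mul_of_one_le_right (le_of_lt hq0) hr₁)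
  have hq₂ : 1 ≤ q₂ := le_trans hq (le_mul_of_one_le_right (le_of_lt hq0) hr₂)
  have hq₁0 : 0 < q₁ := lt_of_lt_of_le one_pos hq₁
  have hq₂0 : 0 < q₂ := lt_of_lt_of_le one_pos hq₂
  -- conjugacy : 1/q = 1/q₁ + 1/q₂
  have hconj : 1 / ENNReal.ofReal q = 1 / ENNReal.ofReal q₁ + 1 / ENNReal.ofReal q₂ := by
    rw [one_div, one_div, one_div, ← ENNReal.ofReal_inv_of_pos hq0,
      ← ENNReal.ofReal_inv_of_pos hq₁0, ← ENNReal.ofReal_inv_of_pos hq₂0,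
      ← ENNReal.ofReal_add (by positivity) (by positivity)]
    congr 1
    rw [hq₁def, hq₂def, mul_inv, mul_inv, inv_div, inv_div, ← mul_add,
      ← add_div, div_self hα.ne', mul_one]
  have hHolder :
      eLpNorm (fun ω => Z₁ ω * Z₂ ω) (ENNReal.ofReal q) μ
        ≤ eLpNorm Z₁ (ENNReal.ofReal q₁) μ * eLpNorm Z₂ (ENNReal.ofReal q₂) μ := by
    haveI : ENNReal.HolderTriple (ENNReal.ofReal q₁) (ENNReal.ofReal q₂) (ENNReal.ofReal q) :=
      ⟨by simpa only [one_div] using hconj.symm⟩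
    have := eLpNorm_smul_le_mul_eLpNorm (μ := μ) (f := Z₂) (φ := Z₁) (p := ENNReal.ofReal q₁)
      (q := ENNReal.ofReal q₂) (r := ENNReal.ofReal q) hZ₂ hZ₁
    exact this
  refine hHolder.trans ?_
  calc eLpNorm Z₁ (ENNReal.ofReal q₁) μ * eLpNorm Z₂ (ENNReal.ofReal q₂) μ
      ≤ ENNReal.ofReal (κ₁ * q₁ ^ α₁) * ENNReal.ofReal (κ₂ * q₂ ^ α₂) :=
        mul_le_mul' (hmom₁ q₁ hq₁) (hmom₂ q₂ hq₂)
    _ = ENNReal.ofReal ((κ₁ * q₁ ^ α₁) * (κ₂ * q₂ ^ α₂)) := by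
        rw [← ENNReal.ofReal_mul (by positivity)]
    _ = ENNReal.ofReal
          ((α₁ + α₂) ^ (α₁ + α₂) / (α₁ ^ α₁ * α₂ ^ α₂) * κ₁ * κ₂ * q ^ (α₁ + α₂)) := by
        congr 1
        rw [hq₁def, hq₂def,
          Real.mul_rpow (le_of_lt hq0) (by positivity),
          Real.mul_rpow (le_of_lt hq0) (by positivity),
          Real.div_rpow (le_of_lt hα) (le_of_lt hα₁),
          Real.div_rpow (le_of_lt hα) (le_of_lt hα₂)]
        have h1 : q ^ α₁ * q ^ α₂ = q ^ (α₁ + α₂) := (Real.rpow_add hq0 _ _).symm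
        have h2 : (α₁ + α₂) ^ α₁ * (α₁ + α₂) ^ α₂ = (α₁ + α₂) ^ (α₁ + α₂) :=
          (Real.rpow_add hα _ _).symm
        have e₁ : α₁ ^ α₁ ≠ 0 := (Real.rpow_pos_of_pos hα₁ α₁).ne'
        have e₂ : α₂ ^ α₂ ≠ 0 := (Real.rpow_pos_of_pos hα₂ α₂).ne'
        rw [← h1, ← h2]
        field_simp
end

section
/- Second-order perturbation of a smooth loss: Let ℓ(x,·): F → ℝ be c₀-Lipschitz with c₁-Lipschitz gradient on a Hilbert space F. For an estimator f̂_n of the data, let f̂_n^i, f̂_n^j, f̂_n^{ij} denote the estimates with the indicated sample points replaced by independent copies, and define ε = max{‖f̂_n - f̂_n^j‖, ‖f̂_n^j - f̂_n^{ij}‖, ‖f̂_n - f̂_n^i‖, ‖f̂_n^i - f̂_n^{ij}‖, ‖f̂_n^j - f̂_n^{ij}‖} and the second-order difference ∇_i∇_j ℓ(x, f̂_n) = ℓ(x,f̂_n) - ℓ(x,f̂_n^i) - ℓ(x,f̂_n^j) + ℓ(x,f̂_n^{ij}). Then |∇_i∇_j ℓ(x, f̂_n)| ≤ c₀·‖f̂_n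 - f̂_n^i - f̂_n^j + f̂_n^{ij}‖ + 2c₁·ε². -/
open InnerProductSpace Set

/-- **Second-order perturbation of a smooth loss.**
If `ℓ` is `c₀`-Lipschitz with `c₁`-Lipschitz gradient `ℓ'`, then for the four estimates
`f̂ₙ, f̂ₙⁱ, f̂ₙʲ, f̂ₙⁱʲ` (denoted `fa, fb, fc, fd`), with
`ε = max{‖fa-fc‖, ‖fc-fd‖, ‖fa-fb‖, ‖fb-fd‖, ‖fc-fd‖}`, the second-order difference
satisfies `|ℓ fa - ℓ fb - ℓ fc + ℓ fd| ≤ c₀ ‖fa - fb - fc + fd‖ + 2 c₁ ε²`. -/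
theorem second_order_loss_perturbation
    {F : Type*} [NormedAddCommGroup F] [InnerProductSpace ℝ F] [CompleteSpace F]
    (ℓ : F → ℝ) (ℓ' : F → F) (c₀ c₁ : ℝ)
    (hgrad : ∀ f : F, HasGradientAt ℓ (ℓ' f) f)
    (hlip₀ : ∀ f f' : F, |ℓ f - ℓ f'| ≤ c₀ * ‖f - f'‖)
    (hlip₁ : ∀ f f' : F, ‖ℓ' f - ℓ' f'‖ ≤ c₁ * ‖f - f'‖)
    (fa fb fc fd : F) :
    |ℓ fa - ℓ fb - ℓ fc + ℓ fd|
      ≤ c₀ * ‖fa - fb - fc + fd‖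
        + 2 * c₁ *
          max (max (max (max ‖fa - fc‖ ‖fc - fd‖) ‖fa - fb‖) ‖fb - fd‖) ‖fc - fd‖ ^ 2 := by
  rcases subsingleton_or_nontrivial F with hF | hF
  · have h1 : fa = fb := Subsingleton.elim _ _
    have h2 : fa = fc := Subsingleton.elim _ _
    have h3 : fa = fd := Subsingleton.elim _ _
    subst h1; subst h2; subst h3
    simp
  -- nontriviality gives c₀, c₁ ≥ 0
  obtain ⟨p, q, hpq⟩ := exists_pair_ne F
  have hpq' : (0:ℝ) < ‖p - q‖ := by simpa [sub_eq_zero] using hpq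
  have hc₀ : 0 ≤ c₀ := by nlinarith [hlip₀ p q, abs_nonneg (ℓ p - ℓ q)]
  have hc₁ : 0 ≤ c₁ := by nlinarith [hlip₁ p q, norm_nonneg (ℓ' p - ℓ' q)]
  set ε := max (max (max (max ‖fa - fc‖ ‖fc - fd‖) ‖fa - fb‖) ‖fb - fd‖) ‖fc - fd‖ with hε
  have hε0 : 0 ≤ ε := le_trans (norm_nonneg _) (le_max_right _ _)
  have hac : ‖fa - fc‖ ≤ ε := le_trans (le_trans (le_trans (le_max_left _ _) (le_max_left _ _)) (le_max_left _ _)) (le_max_left _ _)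
  have hab : ‖fa - fb‖ ≤ ε := le_trans (le_trans (le_max_right _ _) (le_max_left _ _)) (le_max_left _ _)
  have hbd : ‖fb - fd‖ ≤ ε := le_trans (le_max_right _ _) (le_max_left _ _)
  -- ℓ is Lipschitz, so ‖ℓ' x‖ ≤ c₀
  have hlipW : LipschitzWith c₀.toNNReal ℓ := by
    apply LipschitzWith.of_dist_le_mul
    intro x y
    have := hlip₀ x y
    simpa [Real.dist_eq, dist_eq_norm, Real.coe_toNNReal c₀ hc₀] using this
  have hgradnorm : ∀ x : F, ‖ℓ' x‖ ≤ c₀ := by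
    intro x
    have h := (hgrad x).hasFDerivAt.le_of_lipschitz hlipW
    rwa [(toDual ℝ F).norm_map, Real.coe_toNNReal c₀ hc₀] at h
  set u := fa - fb with hu
  set w := fc - fd with hw
  set g : ℝ → ℝ := fun t => ℓ (fb + t • u) - ℓ (fd + t • w) with hg
  set g' : ℝ → ℝ := fun t =>
    (inner ℝ (ℓ' (fb + t • u)) u : ℝ) - (inner ℝ (ℓ' (fd + t • w)) w : ℝ) with hg'
  have hd : ∀ t : ℝ, HasDerivAt g (g' t) t := by
    intro t
    have hl1 : HasDerivAt (fun s : ℝ => fb + s • u) u t := by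
      simpa using ((hasDerivAt_id t).smul_const u).const_add fb
    have hl2 : HasDerivAt (fun s : ℝ => fd + s • w) w t := by
      simpa using ((hasDerivAt_id t).smul_const w).const_add fd
    have h1 : HasDerivAt (fun s : ℝ => ℓ (fb + s • u)) (inner ℝ (ℓ' (fb + t • u)) u : ℝ) t := by
      have := (hgrad (fb + t • u)).hasFDerivAt.comp_hasDerivAt t hl1
      simp only [toDual_apply_apply] at this
      exact this
    have h2 : HasDerivAt (fun s : ℝ => ℓ (fd + s • w)) (inner ℝ (ℓ' (fd + t • w)) w : ℝ) t := by
      have := (hgrad (fd + t • w)).hasFDerivAt.comp_hasDerivAt t hl2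
      simp only [toDual_apply_apply] at this
      exact this
    exact h1.sub h2
  have hbound : ∀ t ∈ Ico (0:ℝ) 1, ‖g' t‖ ≤ c₀ * ‖u - w‖ + c₁ * ε * ε := by
    intro t ht
    obtain ⟨ht0, ht1⟩ := ht
    set γ₁ := fb + t • u
    set γ₂ := fd + t • w
    have hdiff : γ₁ - γ₂ = (1 - t) • (fb - fd) + t • (fa - fc) := by
      simp only [γ₁, γ₂, hu, hw]
      module
    have hγ : ‖γ₁ - γ₂‖ ≤ ε := by
      rw [hdiff]
      calc ‖(1 - t) • (fb - fd) + t • (fa - fc)‖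
          ≤ ‖(1 - t) • (fb - fd)‖ + ‖t • (fa - fc)‖ := norm_add_le _ _
        _ = (1 - t) * ‖fb - fd‖ + t * ‖fa - fc‖ := by
            rw [norm_smul, norm_smul, Real.norm_eq_abs, Real.norm_eq_abs,
              abs_of_nonneg (by linarith), abs_of_nonneg ht0]
        _ ≤ (1 - t) * ε + t * ε := by
            gcongr <;> linarith
        _ = ε := by ring
    have hsplit : g' t = (inner ℝ (ℓ' γ₁ - ℓ' γ₂) u : ℝ) + (inner ℝ (ℓ' γ₂) (u - w) : ℝ) := by
      simp only [hg', inner_sub_left, inner_sub_right]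
      ring
    rw [Real.norm_eq_abs, hsplit]
    calc |(inner ℝ (ℓ' γ₁ - ℓ' γ₂) u : ℝ) + (inner ℝ (ℓ' γ₂) (u - w) : ℝ)|
        ≤ |(inner ℝ (ℓ' γ₁ - ℓ' γ₂) u : ℝ)| + |(inner ℝ (ℓ' γ₂) (u - w) : ℝ)| := abs_add_le _ _
      _ ≤ ‖ℓ' γ₁ - ℓ' γ₂‖ * ‖u‖ + ‖ℓ' γ₂‖ * ‖u - w‖ := by
          gcongr <;> exact abs_real_inner_le_norm _ _
      _ ≤ (c₁ * ε) * ε + c₀ * ‖u - w‖ := by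
          refine add_le_add (mul_le_mul ?_ hab (norm_nonneg _) (mul_nonneg hc₁ hε0)) ?_
          · exact le_trans (hlip₁ γ₁ γ₂) (mul_le_mul_of_nonneg_left hγ hc₁)
          · exact mul_le_mul_of_nonneg_right (hgradnorm γ₂) (norm_nonneg _)
      _ = c₀ * ‖u - w‖ + c₁ * ε * ε := by ring
  have key := norm_image_sub_le_of_norm_deriv_le_segment'
      (f := g) (f' := g') (a := 0) (b := 1) (C := c₀ * ‖u - w‖ + c₁ * ε * ε)
      (fun x _ => (hd x).hasDerivWithinAt) hbound 1 (by norm_num)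
  have hg1 : g 1 = ℓ fa - ℓ fc := by simp [hg, hu, hw]
  have hg0 : g 0 = ℓ fb - ℓ fd := by simp [hg]
  rw [hg1, hg0] at key
  have huw : u - w = fa - fb - fc + fd := by simp [hu, hw]; abel
  have : |ℓ fa - ℓ fb - ℓ fc + ℓ fd| ≤ c₀ * ‖fa - fb - fc + fd‖ + c₁ * ε * ε := by
    rw [← huw]
    calc |ℓ fa - ℓ fb - ℓ fc + ℓ fd| = ‖(ℓ fa - ℓ fc) - (ℓ fb - ℓ fd)‖ := by
          rw [Real.norm_eq_abs]; ring_nf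
      _ ≤ (c₀ * ‖u - w‖ + c₁ * ε * ε) * (1 - 0) := key
      _ = c₀ * ‖u - w‖ + c₁ * ε * ε := by ring
  have hε2 : c₁ * ε * ε ≤ 2 * c₁ * ε ^ 2 := by nlinarith
  linarith
end

section
/- Single-step deviation exponential decay for sieve SGD: Consider the recursion η_t = η_{t-1} - α_t·Λ_t·Z_t·Z_t^T·η_{t-1} in a Hilbert space, where Λ_t is a diagonal positive semidefinite matrix whose j-th diagonal entry is j^{-2w}·1{j ≤ J_t}, α_t‖Λ_t^{1/2}Z_t‖² ≤ 1 almost surely, and E[Z_t Z_t^T | past] ⪰ I on the active coordinates. With η̃_t = Λ_t^{-1/2}η_t, we have E[‖η̃_t‖²/‖η̃_{t-1}‖² | D_{t-1}] ≤ exp(-α_t·J_t^{-2w}) almost surely, and consequently E[‖η̃_t‖² | D_i] ≤ ‖η̃_i‖²·exp(-Σ_{l=i+1}^t α_l·J_l^{-2w}). -/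
open MeasureTheory ProbabilityTheory

/-- Diagonal weights `λ_{t,j} = j^{-2w} 1{j ≤ J_t}` (coordinates indexed from 1). -/
noncomputable def sieveLam (w : ℝ) (J : ℕ → ℕ) (t : ℕ) {d : ℕ} (j : Fin d) : ℝ :=
  if (j : ℕ) + 1 ≤ J t then (((j : ℕ) + 1 : ℝ)) ^ (-(2 * w)) else 0

/-- The normalization `η̃ = Λ^{-1/2} η` (with `0/0 = 0`), which on vectors supported on
the active coordinates is coordinatewise multiplication by `j^w`. -/
noncomputable def sieveTilde (w : ℝ) {d : ℕ} (v : Fin d → ℝ) (j : Fin d) : ℝ :=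
  (((j : ℕ) + 1 : ℝ)) ^ w * v j

lemma sieve_rpow_cancel {p w : ℝ} (hp : 0 < p) : p ^ (-(2*w)) * (p ^ w * p ^ w) = 1 := by
  rw [← Real.rpow_add hp, ← Real.rpow_add hp]
  have he : -(2*w) + (w + w) = 0 := by ring
  rw [he, Real.rpow_zero]

lemma sieve_support {d : ℕ} (w : ℝ) (J : ℕ → ℕ) (hJmono : Monotone J)
    (α : ℕ → ℝ) {Ω : Type*} (Z η : ℕ → Ω → Fin d → ℝ) (i : ℕ)
    (hrec : ∀ t, i < t → ∀ ω j, η t ω j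
      = η (t - 1) ω j
        - α t * sieveLam w J t j * Z t ω j * ∑ j', Z t ω j' * η (t - 1) ω j')
    (hsupp : ∀ ω (j : Fin d), J i < (j : ℕ) + 1 → η i ω j = 0) :
    ∀ t, i ≤ t → ∀ ω (j : Fin d), J t < (j : ℕ) + 1 → η t ω j = 0 := by
  intro t ht
  induction t, ht using Nat.le_induction with
  | base => exact hsupp
  | succ t ht ih =>
    intro ω j hj
    have h0 : η t ω j = 0 := ih ω j (lt_of_le_of_lt (hJmono (Nat.le_succ t)) hj)
    have hl : sieveLam w J (t+1) j = 0 := by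
      simp [sieveLam, not_le.mpr hj]
    rw [hrec (t+1) (Nat.lt_succ_of_le ht), Nat.add_sub_cancel, h0, hl]
    ring

lemma sieve_sq_identity {d : ℕ} {w : ℝ} {J : ℕ → ℕ} {t Jt' : ℕ} (hJ : Jt' ≤ J t)
    (a : ℝ) (z v : Fin d → ℝ)
    (hv : ∀ j : Fin d, Jt' < (j : ℕ) + 1 → v j = 0) :
    ∑ j, (sieveTilde w (fun j => v j - a * sieveLam w J t j * z j * (∑ j', z j' * v j')) j)^2
      = ∑ j, (sieveTilde w v j)^2
        - (2*a - a^2 * ∑ j, sieveLam w J t j * z j^2) * (∑ j', z j' * v j')^2 := by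
  set S := ∑ j', z j' * v j' with hS
  set u : Fin d → ℝ := fun j => sieveLam w J t j * (((j : ℕ) + 1 : ℝ)) ^ w * z j with hu
  set b : Fin d → ℝ := fun j => sieveTilde w v j with hb
  have hp : ∀ j : Fin d, (0:ℝ) < ((j : ℕ) + 1 : ℝ) := fun j => by positivity
  have hterm : ∀ j : Fin d,
      sieveTilde w (fun j => v j - a * sieveLam w J t j * z j * S) j = b j - a * S * u j := by
    intro j; simp only [sieveTilde, hu, hb]; ring
  have hub : ∀ j : Fin d, u j * b j = z j * v j := by
    intro j
    by_cases hj : (j : ℕ) + 1 ≤ J t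
    · have h1 := sieve_rpow_cancel (w := w) (hp j)
      simp only [hu, hb, sieveTilde, sieveLam, if_pos hj]
      linear_combination (z j * v j) * h1
    · have hv0 : v j = 0 := hv j (lt_of_le_of_lt hJ (not_le.mp hj))
      simp [hu, hb, sieveTilde, sieveLam, if_neg hj, hv0]
  have huu : ∀ j : Fin d, u j ^ 2 = sieveLam w J t j * z j ^ 2 := by
    intro j
    by_cases hj : (j : ℕ) + 1 ≤ J t
    · have h1 : (((j:ℕ)+1:ℝ) ^ (-(2*w)) * ((j:ℕ)+1:ℝ) ^ w) ^ 2 = ((j:ℕ)+1:ℝ) ^ (-(2*w)) := by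
        rw [← Real.rpow_add (hp j), ← Real.rpow_natCast, ← Real.rpow_mul (hp j).le]
        congr 1; push_cast; ring
      simp only [hu, sieveLam, if_pos hj]
      linear_combination (z j ^ 2) * h1
    · simp only [hu, sieveLam, if_neg hj]; simp
  have hSub : ∑ j, u j * b j = S := by
    rw [hS]; exact Finset.sum_congr rfl fun j _ => hub j
  calc ∑ j, (sieveTilde w (fun j => v j - a * sieveLam w J t j * z j * S) j)^2
      = ∑ j, (b j ^ 2 - (2*a*S) * (u j * b j) + (a^2*S^2) * (u j ^ 2)) := by
        refine Finset.sum_congr rfl fun j _ => ?_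
        rw [hterm j]; ring
    _ = ∑ j, b j ^ 2 - (2*a*S) * (∑ j, u j * b j) + (a^2*S^2) * (∑ j, u j ^ 2) := by
        rw [Finset.sum_add_distrib, Finset.sum_sub_distrib, ← Finset.mul_sum, ← Finset.mul_sum]
    _ = ∑ j, b j ^ 2 - (2*a - a^2 * ∑ j, sieveLam w J t j * z j^2) * S^2 := by
        rw [hSub]
        have : ∑ j, u j ^ 2 = ∑ j, sieveLam w J t j * z j ^ 2 :=
          Finset.sum_congr rfl fun j _ => huu j
        rw [this]; ring

/-- **Single-step deviation exponential decay for sieve SGD.**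
For the recursion `η_t = η_{t-1} - α_t Λ_t Z_t Z_tᵀ η_{t-1}`, with `Λ_t` the diagonal
matrix with entries `j^{-2w} 1{j ≤ J_t}`, `α_t ‖Λ_t^{1/2} Z_t‖² ≤ 1` a.s., `Z_t` having
orthonormal second moments and independent of the past, with `η̃_t = Λ_t^{-1/2} η_t`:
`E[‖η̃_t‖²/‖η̃_{t-1}‖² | D_{t-1}] ≤ exp(-α_t J_t^{-2w})` a.s., and consequently
`E[‖η̃_t‖² | D_i] ≤ ‖η̃_i‖² exp(-∑_{l=i+1}^t α_l J_l^{-2w})`. -/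
theorem sieve_sgd_deviation_decay
    {Ω : Type*} [m0 : MeasurableSpace Ω] (μ : Measure Ω) [IsProbabilityMeasure μ]
    (d : ℕ) (w : ℝ) (hw : 0 ≤ w)
    (J : ℕ → ℕ) (hJmono : Monotone J) (hJpos : ∀ t, 1 ≤ J t)
    (α : ℕ → ℝ) (hα : ∀ t, 0 ≤ α t)
    (ℱ : ℕ → MeasurableSpace Ω) (hℱ : ∀ t, ℱ t ≤ m0) (hℱmono : Monotone ℱ)
    (Z η : ℕ → Ω → Fin d → ℝ) (i : ℕ)
    (hZmeas : ∀ t j, Measurable[ℱ t] fun ω => Z t ω j)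
    (hηmeas : ∀ t j, Measurable[ℱ t] fun ω => η t ω j)
    (hZindep : ∀ t, i < t →
      Indep (MeasurableSpace.comap (Z t) MeasurableSpace.pi) (ℱ (t - 1)) μ)
    (horth : ∀ t (j j' : Fin d), ∫ ω, Z t ω j * Z t ω j' ∂μ = if j = j' then 1 else 0)
    (hbound : ∃ C : ℝ, ∀ t ω j, |Z t ω j| ≤ C)
    (hstep : ∀ t, i < t → ∀ᵐ ω ∂μ, α t * ∑ j, sieveLam w J t j * Z t ω j ^ 2 ≤ 1)
    (hrec : ∀ t, i < t → ∀ ω j, η t ω j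
      = η (t - 1) ω j
        - α t * sieveLam w J t j * Z t ω j * ∑ j', Z t ω j' * η (t - 1) ω j')
    (hsupp : ∀ ω (j : Fin d), J i < (j : ℕ) + 1 → η i ω j = 0)
    (hint : ∀ t, Integrable (fun ω => ∑ j, sieveTilde w (η t ω) j ^ 2) μ) :
    (∀ t, i < t → ∀ᵐ ω ∂μ,
      (μ[fun ω' => (∑ j, sieveTilde w (η t ω') j ^ 2)
          / (∑ j, sieveTilde w (η (t - 1) ω') j ^ 2) | ℱ (t - 1)]) ω
        ≤ Real.exp (-(α t * (J t : ℝ) ^ (-(2 * w)))))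
    ∧ (∀ t, i ≤ t → ∀ᵐ ω ∂μ,
      (μ[fun ω' => ∑ j, sieveTilde w (η t ω') j ^ 2 | ℱ i]) ω
        ≤ (∑ j, sieveTilde w (η i ω) j ^ 2)
            * Real.exp (-(∑ l ∈ Finset.Ioc i t, α l * (J l : ℝ) ^ (-(2 * w))))) := by
  obtain ⟨C, hC⟩ := hbound
  have hZm0 : ∀ s (j : Fin d), Measurable fun ω => Z s ω j :=
    fun s j => (hZmeas s j).mono (hℱ s) le_rfl
  have hηm0 : ∀ s (j : Fin d), Measurable fun ω => η s ω j :=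
    fun s j => (hηmeas s j).mono (hℱ s) le_rfl
  have hXmeas : ∀ s, Measurable[ℱ s] (fun ω => ∑ j, sieveTilde w (η s ω) j ^ 2) := by
    intro s
    refine Finset.measurable_sum _ fun j _ => ?_
    simp only [sieveTilde]
    exact (measurable_const.mul (hηmeas s j)).pow_const 2
  have hXm0 : ∀ s, Measurable (fun ω => ∑ j, sieveTilde w (η s ω) j ^ 2) :=
    fun s => (hXmeas s).mono (hℱ s) le_rfl
  have hXnn : ∀ s ω, (0:ℝ) ≤ ∑ j, sieveTilde w (η s ω) j ^ 2 :=
    fun s ω => Finset.sum_nonneg fun j _ => sq_nonneg _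
  have hsup := sieve_support w J hJmono α Z η i hrec hsupp
  -- integrability of η products
  have hη2int : ∀ s (j : Fin d), Integrable (fun ω => (η s ω j)^2) μ := by
    intro s j
    refine Integrable.mono' (hint s) (((hηm0 s j).pow_const 2).aestronglyMeasurable) ?_
    refine Filter.Eventually.of_forall fun ω => ?_
    rw [Real.norm_eq_abs, abs_of_nonneg (sq_nonneg _)]
    have h1 : (η s ω j)^2 ≤ sieveTilde w (η s ω) j ^ 2 := by
      have hp1 : (1:ℝ) ≤ ((j:ℕ) + 1 : ℝ) := by
        have := Nat.cast_nonneg (α := ℝ) (j:ℕ); linarith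
      have hpw : (1:ℝ) ≤ ((j:ℕ)+1:ℝ) ^ w := by
        calc (1:ℝ) = (1:ℝ) ^ w := (Real.one_rpow w).symm
        _ ≤ ((j:ℕ)+1:ℝ) ^ w := Real.rpow_le_rpow zero_le_one hp1 hw
      simp only [sieveTilde, mul_pow]
      have h2 : (1:ℝ) ≤ (((j:ℕ)+1:ℝ) ^ w)^2 := by nlinarith
      nlinarith [sq_nonneg (η s ω j)]
    refine h1.trans (Finset.single_le_sum
      (f := fun j' => sieveTilde w (η s ω) j' ^ 2) (fun j' _ => sq_nonneg _) (Finset.mem_univ j))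
  -- conditional expectation of S² and integrability of S²
  have hSmain : ∀ t, i < t →
      Integrable (fun ω => (∑ j', Z t ω j' * η (t-1) ω j')^2) μ ∧
      μ[fun ω => (∑ j', Z t ω j' * η (t-1) ω j')^2 | ℱ (t-1)]
        =ᵐ[μ] fun ω => ∑ j : Fin d, (η (t-1) ω j)^2 := by
    intro t ht
    have hm : ℱ (t-1) ≤ m0 := hℱ (t-1)
    set F : Fin d → Fin d → Ω → ℝ :=
      fun j j' ω => (η (t-1) ω j * η (t-1) ω j') * (Z t ω j * Z t ω j') with hF
    have hFint : ∀ j j', Integrable (F j j') μ := by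
      intro j j'
      refine Integrable.mono' (((hη2int (t-1) j).add (hη2int (t-1) j')).const_mul (C^2))
        ((((hηm0 (t-1) j).mul (hηm0 (t-1) j')).mul
          ((hZm0 t j).mul (hZm0 t j'))).aestronglyMeasurable)
        (Filter.Eventually.of_forall fun ω => ?_)
      have h1 := hC t ω j
      have h2 := hC t ω j'
      have h0 : (0:ℝ) ≤ C := (abs_nonneg _).trans h1
      rw [Real.norm_eq_abs, abs_mul]
      have hzz : |Z t ω j * Z t ω j'| ≤ C^2 := by
        rw [abs_mul]; nlinarith [abs_nonneg (Z t ω j), abs_nonneg (Z t ω j')]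
      have hee : |η (t-1) ω j * η (t-1) ω j'| ≤ (η (t-1) ω j)^2 + (η (t-1) ω j')^2 := by
        rw [abs_mul]
        nlinarith [sq_nonneg (|η (t-1) ω j| - |η (t-1) ω j'|), sq_abs (η (t-1) ω j),
          sq_abs (η (t-1) ω j'), abs_nonneg (η (t-1) ω j), abs_nonneg (η (t-1) ω j')]
      calc |η (t-1) ω j * η (t-1) ω j'| * |Z t ω j * Z t ω j'|
          ≤ |η (t-1) ω j * η (t-1) ω j'| * C^2 := mul_le_mul_of_nonneg_left hzz (abs_nonneg _)
        _ ≤ C^2 * ((η (t-1) ω j)^2 + (η (t-1) ω j')^2) := by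
            rw [mul_comm]
            exact mul_le_mul_of_nonneg_left hee (by positivity)
    have hle₁ : MeasurableSpace.comap (Z t) MeasurableSpace.pi ≤ m0 :=
      measurable_iff_comap_le.mp (measurable_pi_iff.mpr fun j => hZm0 t j)
    have hZcm : Measurable[MeasurableSpace.comap (Z t) MeasurableSpace.pi] (Z t) :=
      measurable_iff_comap_le.mpr le_rfl
    have hcondZZ : ∀ j j' : Fin d, μ[fun ω => Z t ω j * Z t ω j' | ℱ (t-1)]
        =ᵐ[μ] fun _ => (if j = j' then (1:ℝ) else 0) := by
      intro j j'
      have hsm : StronglyMeasurable[MeasurableSpace.comap (Z t) MeasurableSpace.pi]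
          (fun ω => Z t ω j * Z t ω j') :=
        (((measurable_pi_apply j).comp hZcm).mul
          ((measurable_pi_apply j').comp hZcm)).stronglyMeasurable
      have := condExp_indep_eq hle₁ hm hsm (hZindep t ht)
      rw [horth t j j'] at this
      exact this
    have hZZint : ∀ j j' : Fin d, Integrable (fun ω => Z t ω j * Z t ω j') μ := by
      intro j j'
      refine Integrable.mono' (integrable_const (C^2))
        (((hZm0 t j).mul (hZm0 t j')).aestronglyMeasurable)
        (Filter.Eventually.of_forall fun ω => ?_)
      rw [Real.norm_eq_abs, abs_mul]
      nlinarith [hC t ω j, hC t ω j', abs_nonneg (Z t ω j), abs_nonneg (Z t ω j')]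
    have hpull : ∀ j j' : Fin d, μ[F j j' | ℱ (t-1)]
        =ᵐ[μ] (fun ω => η (t-1) ω j * η (t-1) ω j') * μ[fun ω => Z t ω j * Z t ω j' | ℱ (t-1)] := by
      intro j j'
      exact condExp_mul_of_stronglyMeasurable_left
        (((hηmeas (t-1) j).mul (hηmeas (t-1) j')).stronglyMeasurable)
        (hFint j j') (hZZint j j')
    have h1 : ∀ᵐ ω ∂μ, ∀ j j' : Fin d, (μ[F j j' | ℱ (t-1)]) ω
        = (η (t-1) ω j * η (t-1) ω j') * (if j = j' then (1:ℝ) else 0) := by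
      rw [ae_all_iff]; intro j
      rw [ae_all_iff]; intro j'
      filter_upwards [hpull j j', hcondZZ j j'] with ω ha hb
      rw [ha, Pi.mul_apply, hb]
    set G : Fin d → Ω → ℝ := fun j => ∑ j', F j j' with hG
    have hGint : ∀ j, Integrable (G j) μ := by
      intro j
      have : G j = fun ω => ∑ j', F j j' ω := by
        funext ω; simp [hG, Finset.sum_apply]
      rw [this]
      exact integrable_finset_sum _ (fun j' _ => hFint j j')
    have hAe2 : ∀ᵐ ω ∂μ, ∀ j : Fin d, (μ[G j | ℱ (t-1)]) ω = ∑ j', (μ[F j j' | ℱ (t-1)]) ω := by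
      rw [ae_all_iff]; intro j
      filter_upwards [condExp_finsetSum (fun j' _ => hFint j j')
        (s := Finset.univ) (m := ℱ (t-1))] with ω h
      simp only [hG]
      rw [h, Finset.sum_apply]
    have hfun : (fun ω => (∑ j', Z t ω j' * η (t-1) ω j')^2) = ∑ j, G j := by
      funext ω
      rw [Finset.sum_apply]
      simp only [hG, Finset.sum_apply, hF]
      rw [sq, Finset.sum_mul_sum]
      exact Finset.sum_congr rfl fun j _ => Finset.sum_congr rfl fun j' _ => by ring
    constructor
    · have h2 : Integrable (fun ω => ∑ j, G j ω) μ := integrable_finset_sum _ fun j _ => hGint j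
      have hfun' : (fun ω => (∑ j', Z t ω j' * η (t-1) ω j')^2) = fun ω => ∑ j, G j ω := by
        funext ω; rw [congrFun hfun ω, Finset.sum_apply]
      rw [hfun']; exact h2
    · rw [hfun]
      have hsum1 := condExp_finsetSum (fun j _ => hGint j) (s := Finset.univ) (m := ℱ (t-1))
      filter_upwards [hsum1, hAe2, h1] with ω e1 e2 e3
      rw [e1, Finset.sum_apply]
      calc ∑ j, (μ[G j|ℱ (t-1)]) ω = ∑ j, ∑ j', (μ[F j j'|ℱ (t-1)]) ω :=
            Finset.sum_congr rfl fun j _ => e2 j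
        _ = ∑ j, ∑ j', (η (t-1) ω j * η (t-1) ω j') * (if j = j' then (1:ℝ) else 0) :=
            Finset.sum_congr rfl fun j _ => Finset.sum_congr rfl fun j' _ => e3 j j'
        _ = ∑ j, (η (t-1) ω j)^2 := by
            refine Finset.sum_congr rfl fun j _ => ?_
            simp [mul_ite, Finset.sum_ite_eq, sq]
  -- pointwise identity for the squared norm
  have hid : ∀ t, i < t → ∀ ω,
      ∑ j, sieveTilde w (η t ω) j ^ 2
        = ∑ j, sieveTilde w (η (t-1) ω) j ^ 2
          - (2*α t - (α t)^2 * ∑ j, sieveLam w J t j * Z t ω j^2)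
            * (∑ j', Z t ω j' * η (t-1) ω j')^2 := by
    intro t ht ω
    have hfe : η t ω = fun j => η (t-1) ω j
        - α t * sieveLam w J t j * Z t ω j * (∑ j', Z t ω j' * η (t-1) ω j') :=
      funext fun j => hrec t ht ω j
    rw [hfe]
    exact sieve_sq_identity (hJmono (Nat.sub_le t 1)) _ _ _
      (fun j hj => hsup (t-1) (Nat.le_sub_one_of_lt ht) ω j hj)
  -- lower bound on plain squared norm
  have hlow : ∀ t, i < t → ∀ ω,
      (J t:ℝ)^(-(2*w)) * ∑ j, sieveTilde w (η (t-1) ω) j ^ 2 ≤ ∑ j, (η (t-1) ω j)^2 := by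
    intro t ht ω
    rw [Finset.mul_sum]
    refine Finset.sum_le_sum fun j _ => ?_
    by_cases hz : η (t-1) ω j = 0
    · simp [sieveTilde, hz]
    · have hjle : (j:ℕ) + 1 ≤ J (t-1) := by
        by_contra h
        exact hz (hsup (t-1) (Nat.le_sub_one_of_lt ht) ω j (not_le.mp h))
      have hjle' : ((j:ℕ)+1:ℝ) ≤ (J t:ℝ) := by
        exact_mod_cast hjle.trans (hJmono (Nat.sub_le t 1))
      have hp0 : (0:ℝ) < ((j:ℕ)+1:ℝ) := by positivity
      have hle : (J t:ℝ)^(-(2*w)) ≤ ((j:ℕ)+1:ℝ)^(-(2*w)) :=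
        Real.rpow_le_rpow_of_nonpos hp0 hjle' (by linarith)
      have hone := sieve_rpow_cancel (w := w) hp0
      simp only [sieveTilde]
      calc (J t:ℝ)^(-(2*w)) * (((j:ℕ)+1:ℝ)^w * η (t-1) ω j)^2
          ≤ ((j:ℕ)+1:ℝ)^(-(2*w)) * (((j:ℕ)+1:ℝ)^w * η (t-1) ω j)^2 :=
            mul_le_mul_of_nonneg_right hle (sq_nonneg _)
        _ = (η (t-1) ω j)^2 := by linear_combination (η (t-1) ω j)^2 * hone
  -- key single-step conditional bound
  have hkey : ∀ t, i < t →
      μ[fun ω => ∑ j, sieveTilde w (η t ω) j ^ 2 | ℱ (t-1)] ≤ᵐ[μ]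
        fun ω => (1 - α t * (J t:ℝ)^(-(2*w))) * ∑ j, sieveTilde w (η (t-1) ω) j ^ 2 := by
    intro t ht
    obtain ⟨hS2int, hScond⟩ := hSmain t ht
    have hle1 : (fun ω => ∑ j, sieveTilde w (η t ω) j ^ 2) ≤ᵐ[μ]
        fun ω => ∑ j, sieveTilde w (η (t-1) ω) j ^ 2
          - α t * (∑ j', Z t ω j' * η (t-1) ω j')^2 := by
      filter_upwards [hstep t ht] with ω hω
      rw [hid t ht ω]
      have hq : α t ^ 2 * (∑ j, sieveLam w J t j * Z t ω j ^ 2) ≤ α t := by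
        nlinarith [mul_le_mul_of_nonneg_left hω (hα t)]
      have hco := mul_le_mul_of_nonneg_right
        (by linarith : α t ≤ 2*α t - α t ^ 2 * ∑ j, sieveLam w J t j * Z t ω j ^ 2)
        (sq_nonneg (∑ j', Z t ω j' * η (t-1) ω j'))
      linarith
    have hcmono := condExp_mono (m := ℱ (t-1)) (hint t)
      ((hint (t-1)).sub (hS2int.const_mul (α t))) hle1
    have hsub := condExp_sub (m := ℱ (t-1)) (hint (t-1)) (hS2int.const_mul (α t))
    have hsmul : μ[fun ω => α t * (∑ j', Z t ω j' * η (t-1) ω j')^2 | ℱ (t-1)]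
        =ᵐ[μ] fun ω => α t
          * (μ[fun ω => (∑ j', Z t ω j' * η (t-1) ω j')^2 | ℱ (t-1)]) ω := by
      have := condExp_smul (μ := μ) (m := ℱ (t-1)) (α t)
        (fun ω => (∑ j', Z t ω j' * η (t-1) ω j')^2)
      exact this
    have hXcond : μ[fun ω => ∑ j, sieveTilde w (η (t-1) ω) j ^ 2 | ℱ (t-1)]
        = fun ω => ∑ j, sieveTilde w (η (t-1) ω) j ^ 2 :=
      condExp_of_stronglyMeasurable (hℱ (t-1)) ((hXmeas (t-1)).stronglyMeasurable) (hint (t-1))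
    filter_upwards [hcmono, hsub, hsmul, hScond] with ω e1 e2 e3 e4
    refine le_trans e1 ?_
    have e5 : (μ[fun ω => ∑ j, sieveTilde w (η (t-1) ω) j ^ 2 | ℱ (t-1)]) ω
        = ∑ j, sieveTilde w (η (t-1) ω) j ^ 2 := by rw [hXcond]
    rw [e2, Pi.sub_apply, e3, e4, e5]
    have hmul := mul_le_mul_of_nonneg_left (hlow t ht ω) (hα t)
    nlinarith [hmul]
  refine ⟨?_, ?_⟩
  · -- part 1
    intro t ht
    have hXle : ∀ᵐ ω ∂μ, (∑ j, sieveTilde w (η t ω) j ^ 2)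
        ≤ ∑ j, sieveTilde w (η (t-1) ω) j ^ 2 := by
      filter_upwards [hstep t ht] with ω hω
      rw [hid t ht ω]
      have hq : α t ^ 2 * (∑ j, sieveLam w J t j * Z t ω j ^ 2) ≤ α t := by
        nlinarith [mul_le_mul_of_nonneg_left hω (hα t)]
      have hco := mul_le_mul_of_nonneg_right
        (by linarith [hα t] : (0:ℝ) ≤ 2*α t - α t ^ 2 * ∑ j, sieveLam w J t j * Z t ω j ^ 2)
        (sq_nonneg (∑ j', Z t ω j' * η (t-1) ω j'))
      nlinarith [hco]
    have hratio_int : Integrable ((fun ω => (∑ j, sieveTilde w (η (t-1) ω) j ^ 2)⁻¹)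
        * (fun ω => ∑ j, sieveTilde w (η t ω) j ^ 2)) μ := by
      refine Integrable.mono' (integrable_const 1)
        ((hXm0 (t-1)).inv.mul (hXm0 t)).aestronglyMeasurable ?_
      filter_upwards [hXle] with ω hω
      rw [Pi.mul_apply, Real.norm_eq_abs,
        abs_of_nonneg (mul_nonneg (inv_nonneg.mpr (hXnn _ ω)) (hXnn t ω))]
      by_cases hY : (∑ j, sieveTilde w (η (t-1) ω) j ^ 2) = 0
      · have h0 : (∑ j, sieveTilde w (η t ω) j ^ 2) = 0 :=
          le_antisymm (hY ▸ hω) (hXnn t ω)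
        rw [hY, h0]; simp
      · have hYpos : 0 < ∑ j, sieveTilde w (η (t-1) ω) j ^ 2 :=
          lt_of_le_of_ne (hXnn _ ω) (Ne.symm hY)
        rw [inv_mul_le_iff₀ hYpos]
        linarith
    have hmul : μ[(fun ω => (∑ j, sieveTilde w (η (t-1) ω) j ^ 2)⁻¹)
          * (fun ω => ∑ j, sieveTilde w (η t ω) j ^ 2) | ℱ (t-1)]
        =ᵐ[μ] (fun ω => (∑ j, sieveTilde w (η (t-1) ω) j ^ 2)⁻¹)
          * μ[fun ω => ∑ j, sieveTilde w (η t ω) j ^ 2 | ℱ (t-1)] :=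
      condExp_mul_of_stronglyMeasurable_left ((hXmeas (t-1)).inv.stronglyMeasurable)
        hratio_int (hint t)
    have hfeq : (fun ω' => (∑ j, sieveTilde w (η t ω') j ^ 2)
          / (∑ j, sieveTilde w (η (t-1) ω') j ^ 2))
        = (fun ω => (∑ j, sieveTilde w (η (t-1) ω) j ^ 2)⁻¹)
          * (fun ω => ∑ j, sieveTilde w (η t ω) j ^ 2) := by
      funext ω; rw [Pi.mul_apply, div_eq_mul_inv, mul_comm]
    rw [hfeq]
    filter_upwards [hmul, hkey t ht] with ω e1 e2
    rw [e1, Pi.mul_apply]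
    by_cases hY : (∑ j, sieveTilde w (η (t-1) ω) j ^ 2) = 0
    · rw [hY, inv_zero, zero_mul]
      exact (Real.exp_pos _).le
    · have hYpos : 0 < ∑ j, sieveTilde w (η (t-1) ω) j ^ 2 :=
        lt_of_le_of_ne (hXnn _ ω) (Ne.symm hY)
      have h3 := mul_le_mul_of_nonneg_left e2 (inv_nonneg.mpr hYpos.le)
      have h4 : (∑ j, sieveTilde w (η (t-1) ω) j ^ 2)⁻¹
          * ((1 - α t * (J t:ℝ)^(-(2*w))) * ∑ j, sieveTilde w (η (t-1) ω) j ^ 2)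
          = 1 - α t * (J t:ℝ)^(-(2*w)) := by
        field_simp
      rw [h4] at h3
      refine h3.trans ?_
      linarith [Real.add_one_le_exp (-(α t * (J t:ℝ)^(-(2*w))))]
  · -- part 2
    intro t ht
    induction t, ht using Nat.le_induction with
    | base =>
      have h0 : μ[fun ω' => ∑ j, sieveTilde w (η i ω') j ^ 2 | ℱ i]
          = fun ω' => ∑ j, sieveTilde w (η i ω') j ^ 2 :=
        condExp_of_stronglyMeasurable (hℱ i) ((hXmeas i).stronglyMeasurable) (hint i)
      rw [h0]
      refine Filter.Eventually.of_forall fun ω => ?_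
      simp
    | succ t ht ih =>
      have h1 : μ[fun ω' => ∑ j, sieveTilde w (η (t+1) ω') j ^ 2 | ℱ i]
          =ᵐ[μ] μ[μ[fun ω' => ∑ j, sieveTilde w (η (t+1) ω') j ^ 2 | ℱ t] | ℱ i] :=
        (condExp_condExp_of_le (hℱmono ht) (hℱ t)).symm
      have hk := hkey (t+1) (Nat.lt_succ_of_le ht)
      rw [Nat.add_sub_cancel] at hk
      have hk' : μ[fun ω' => ∑ j, sieveTilde w (η (t+1) ω') j ^ 2 | ℱ t] ≤ᵐ[μ]
          fun ω => Real.exp (-(α (t+1) * (J (t+1):ℝ)^(-(2*w))))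
            * ∑ j, sieveTilde w (η t ω) j ^ 2 := by
        filter_upwards [hk] with ω h
        refine h.trans (mul_le_mul_of_nonneg_right ?_ (hXnn t ω))
        linarith [Real.add_one_le_exp (-(α (t+1) * (J (t+1):ℝ)^(-(2*w))))]
      have h2 := condExp_mono (m := ℱ i) (integrable_condExp) ((hint t).const_mul _) hk'
      have h3 : μ[fun ω => Real.exp (-(α (t+1) * (J (t+1):ℝ)^(-(2*w))))
            * ∑ j, sieveTilde w (η t ω) j ^ 2 | ℱ i]
          =ᵐ[μ] fun ω => Real.exp (-(α (t+1) * (J (t+1):ℝ)^(-(2*w))))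
            * (μ[fun ω' => ∑ j, sieveTilde w (η t ω') j ^ 2 | ℱ i]) ω := by
        have := condExp_smul (μ := μ) (m := ℱ i)
          (Real.exp (-(α (t+1) * (J (t+1):ℝ)^(-(2*w)))))
          (fun ω => ∑ j, sieveTilde w (η t ω) j ^ 2)
        exact this
      filter_upwards [h1, h2, h3, ih] with ω e1 e2 e3 e4
      calc (μ[fun ω' => ∑ j, sieveTilde w (η (t+1) ω') j ^ 2 | ℱ i]) ω
          = (μ[μ[fun ω' => ∑ j, sieveTilde w (η (t+1) ω') j ^ 2 | ℱ t] | ℱ i]) ω := e1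
        _ ≤ (μ[fun ω => Real.exp (-(α (t+1) * (J (t+1):ℝ)^(-(2*w))))
              * ∑ j, sieveTilde w (η t ω) j ^ 2 | ℱ i]) ω := e2
        _ = Real.exp (-(α (t+1) * (J (t+1):ℝ)^(-(2*w))))
              * (μ[fun ω' => ∑ j, sieveTilde w (η t ω') j ^ 2 | ℱ i]) ω := e3
        _ ≤ Real.exp (-(α (t+1) * (J (t+1):ℝ)^(-(2*w))))
              * ((∑ j, sieveTilde w (η i ω) j ^ 2)
                * Real.exp (-(∑ l ∈ Finset.Ioc i t, α l * (J l : ℝ) ^ (-(2 * w))))) :=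
            mul_le_mul_of_nonneg_left e4 (Real.exp_pos _).le
        _ = (∑ j, sieveTilde w (η i ω) j ^ 2)
              * Real.exp (-(∑ l ∈ Finset.Ioc i (t+1), α l * (J l : ℝ) ^ (-(2 * w)))) := by
            rw [Finset.sum_Ioc_succ_top ht, neg_add, Real.exp_add]
            ring
end
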